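/- Let n ≥ 1, M ≥ 0, and let H : ℝⁿ → ℝ be convex with H(0) = 0 and |p|² ≤ H(p) ≤ |p|² + M|p| for all p ∈ ℝⁿ, and assume H is radially strictly convex. For A ≥ 1 define H_A(q) := A²·H(q/A). Then for every θ > 0 there exists μ > 0 such that for every A ≥ 1, every p ∈ ℝⁿ with |p| ≥ θA, and every subgradient q of H_A at p, one has q·p ≥ H_A(p) + μA². -/

import Mathlib

open scoped RealInnerProductSpace

lemma midpoint_linear {n : ℕ} (H : EuclideanSpace ℝ (Fin n) → ℝ)
    (hconv : ConvexOn ℝ Set.univ H) (h0 : H 0 = 0)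
    (p : EuclideanSpace ℝ (Fin n)) (hmid : H ((2⁻¹:ℝ) • p) = 2⁻¹ * H p) :
    ∀ s ∈ Set.Icc (0:ℝ) 1, H (s • p) = s * H p := by
  have hle : ∀ s ∈ Set.Icc (0:ℝ) 1, H (s • p) ≤ s * H p := by
    intro s hs
    have ha : (0:ℝ) ≤ s := hs.1
    have hb : (0:ℝ) ≤ 1 - s := by linarith [hs.2]
    have hab : s + (1 - s) = 1 := by ring
    have := hconv.2 (Set.mem_univ p) (Set.mem_univ (0 : EuclideanSpace ℝ (Fin n))) ha hb hab
    simpa [h0, smul_zero, smul_eq_mul] using this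
  intro s hs
  refine le_antisymm (hle s hs) ?_
  rcases le_or_gt s 2⁻¹ with hcase | hcase
  · set t : ℝ := (2⁻¹ - s) / (1 - s) with ht
    have h1s : (0:ℝ) < 1 - s := by rcases hs with ⟨h1, h2⟩; nlinarith
    have ht0 : 0 ≤ t := div_nonneg (by linarith) (le_of_lt h1s)
    have ht1 : t ≤ 2⁻¹ := by
      rw [ht, div_le_iff₀ h1s]; nlinarith [hs.1]
    have hcomb : (1 - t) * s + t = 2⁻¹ := by
      have htm : t * (1 - s) = 2⁻¹ - s := by rw [ht]; exact div_mul_cancel₀ _ h1s.ne'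
      linear_combination htm
    have ha' : (0:ℝ) ≤ 1 - t := by linarith
    have hab' : (1 - t) + t = 1 := by ring
    have hineq := hconv.2 (Set.mem_univ (s • p)) (Set.mem_univ p) ha' ht0 hab'
    simp only [smul_eq_mul, smul_smul] at hineq
    have hpt : ((1 - t) * s) • p + t • p = (2⁻¹:ℝ) • p := by
      rw [← add_smul, hcomb]
    rw [hpt, hmid] at hineq
    have hc2 : (1 - t) * s = 2⁻¹ - t := by linarith [hcomb]
    have h2 : (1 - t) * (s * H p) ≤ (1 - t) * H (s • p) := by
      have : (1 - t) * (s * H p) = (2⁻¹ - t) * H p := by rw [← hc2]; ring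
      rw [this]; linarith [hineq]
    exact le_of_mul_le_mul_left h2 (by linarith)
  · set u : ℝ := 1 / (2 * s) with hu
    have hs0 : (0:ℝ) < s := by linarith
    have hu0 : 0 < u := by positivity
    have hu1 : u ≤ 1 := by
      rw [hu, div_le_one (by linarith)]; linarith
    have hus : u * s = 2⁻¹ := by rw [hu]; field_simp
    have hb' : (0:ℝ) ≤ 1 - u := by linarith
    have hab' : u + (1 - u) = 1 := by ring
    have hineq := hconv.2 (Set.mem_univ (s • p)) (Set.mem_univ (0 : EuclideanSpace ℝ (Fin n)))
      (le_of_lt hu0) hb' hab'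
    simp only [smul_eq_mul, smul_smul, smul_zero, add_zero, hus] at hineq
    rw [hmid, h0, mul_zero, add_zero] at hineq
    have h2 : u * (s * H p) ≤ u * H (s • p) := by
      calc u * (s * H p) = (u * s) * H p := by ring
        _ = 2⁻¹ * H p := by rw [hus]
        _ ≤ u * H (s • p) := hineq
    exact le_of_mul_le_mul_left h2 hu0

lemma D_pos {n : ℕ} (H : EuclideanSpace ℝ (Fin n) → ℝ)
    (hconv : ConvexOn ℝ Set.univ H) (h0 : H 0 = 0)
    (hrad : ∀ p₁ p₂ : EuclideanSpace ℝ (Fin n),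
      (∀ s ∈ Set.Icc (0:ℝ) 1,
        H ((1 - s) • p₁ + s • p₂) = (1 - s) * H p₁ + s * H p₂) →
      0 < H p₂ →
      ∀ s ∈ Set.Icc (0:ℝ) 1, H ((1 - s) • p₁ + s • p₂) = H p₂)
    (p : EuclideanSpace ℝ (Fin n)) (hp : 0 < H p) :
    0 < H p - 2 * H ((2⁻¹:ℝ) • p) := by
  -- convexity gives H(2⁻¹ • p) ≤ 2⁻¹ * H p
  have hle : H ((2⁻¹:ℝ) • p) ≤ 2⁻¹ * H p := by
    have ha : (0:ℝ) ≤ 2⁻¹ := by norm_num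
    have hb : (0:ℝ) ≤ 1 - 2⁻¹ := by norm_num
    have hab : (2⁻¹:ℝ) + (1 - 2⁻¹) = 1 := by ring
    have := hconv.2 (Set.mem_univ p) (Set.mem_univ (0 : EuclideanSpace ℝ (Fin n))) ha hb hab
    simpa [h0, smul_zero, smul_eq_mul] using this
  rcases lt_or_ge (H ((2⁻¹:ℝ) • p)) (2⁻¹ * H p) with h | h
  · linarith
  · exfalso
    have hmid : H ((2⁻¹:ℝ) • p) = 2⁻¹ * H p := le_antisymm hle h
    have hlin := midpoint_linear H hconv h0 p hmid
    have haff : ∀ s ∈ Set.Icc (0:ℝ) 1,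
        H ((1 - s) • (0 : EuclideanSpace ℝ (Fin n)) + s • p) = (1 - s) * H 0 + s * H p := by
      intro s hs
      rw [smul_zero, zero_add, hlin s hs, h0]; ring
    have hconst := hrad 0 p haff hp 0 (by constructor <;> norm_num)
    rw [smul_zero, zero_smul, add_zero, h0] at hconst
    linarith

lemma main_free {n : ℕ} (hn : 1 ≤ n) (M : ℝ) (hM : 0 ≤ M)
    (H : EuclideanSpace ℝ (Fin n) → ℝ) (hconv : ConvexOn ℝ Set.univ H)
    (h0 : H 0 = 0)
    (hbounds : ∀ p, ‖p‖ ^ 2 ≤ H p ∧ H p ≤ ‖p‖ ^ 2 + M * ‖p‖)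
    (hrad : ∀ p₁ p₂ : EuclideanSpace ℝ (Fin n),
      (∀ s ∈ Set.Icc (0:ℝ) 1,
        H ((1 - s) • p₁ + s • p₂) = (1 - s) * H p₁ + s * H p₂) →
      0 < H p₂ →
      ∀ s ∈ Set.Icc (0:ℝ) 1, H ((1 - s) • p₁ + s • p₂) = H p₂)
    (θ : ℝ) (hθ : 0 < θ) :
    ∃ μ > (0:ℝ), ∀ p : EuclideanSpace ℝ (Fin n), θ ≤ ‖p‖ →
      μ ≤ H p - 2 * H ((2⁻¹:ℝ) • p) := by
  have hcont : Continuous H := hconv.locallyLipschitz.continuous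
  set D : EuclideanSpace ℝ (Fin n) → ℝ := fun p => H p - 2 * H ((2⁻¹:ℝ) • p) with hD
  have hDcont : Continuous D := by
    apply hcont.sub
    exact continuous_const.mul (hcont.comp (continuous_const_smul _))
  set R : ℝ := max θ (2 * M + 2) with hR
  have hθR : θ ≤ R := le_max_left _ _
  set K : Set (EuclideanSpace ℝ (Fin n)) :=
    Metric.closedBall 0 R ∩ {p | θ ≤ ‖p‖} with hK
  have hKc : IsCompact K := by
    apply (isCompact_closedBall (0 : EuclideanSpace ℝ (Fin n)) R).inter_right
    have : {p : EuclideanSpace ℝ (Fin n) | θ ≤ ‖p‖} = (norm) ⁻¹' (Set.Ici θ) := rfl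
    rw [this]
    exact isClosed_Ici.preimage continuous_norm
  have hKne : K.Nonempty := by
    refine ⟨θ • EuclideanSpace.single (⟨0, hn⟩ : Fin n) (1:ℝ), ?_, ?_⟩
    · rw [Metric.mem_closedBall, dist_zero_right, norm_smul, EuclideanSpace.norm_single]
      simp [abs_of_pos hθ]
      exact hθR
    · simp only [Set.mem_setOf_eq, norm_smul, EuclideanSpace.norm_single]
      simp [abs_of_pos hθ]
  obtain ⟨p₀, hp₀K, hmin⟩ := hKc.exists_isMinOn hKne hDcont.continuousOn
  have hp₀pos : 0 < H p₀ := by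
    have h1 := (hbounds p₀).1
    have h2 : θ ≤ ‖p₀‖ := hp₀K.2
    nlinarith
  have hDp₀ : 0 < D p₀ := D_pos H hconv h0 hrad p₀ hp₀pos
  refine ⟨min (D p₀) 1, lt_min hDp₀ one_pos, ?_⟩
  intro p hp
  rcases le_or_gt ‖p‖ R with hle | hgt
  · have hpK : p ∈ K := ⟨by rw [Metric.mem_closedBall, dist_zero_right]; exact hle, hp⟩
    have := hmin hpK
    calc min (D p₀) 1 ≤ D p₀ := min_le_left _ _
      _ ≤ D p := this
  · have h1 := (hbounds p).1
    have h2 := (hbounds ((2⁻¹:ℝ) • p)).2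
    have hnorm : ‖(2⁻¹:ℝ) • p‖ = 2⁻¹ * ‖p‖ := by
      rw [norm_smul]; norm_num
    rw [hnorm] at h2
    have hpR : 2 * M + 2 ≤ ‖p‖ := le_trans (le_max_right _ _) (le_of_lt hgt)
    have : (1:ℝ) ≤ D p := by
      simp only [hD]
      nlinarith [sq_nonneg ‖p‖, hpR]
    calc min (D p₀) 1 ≤ 1 := min_le_right _ _
      _ ≤ D p := this

/-- `q` is a subgradient of `F` at `p`. -/
def IsSubgradient {n : ℕ} (F : EuclideanSpace ℝ (Fin n) → ℝ)
    (p q : EuclideanSpace ℝ (Fin n)) : Prop :=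
  ∀ y, F y ≥ F p + ⟪q, y - p⟫

/-- `H` is radially strictly convex: whenever `H` is affine on a segment `[p₁, p₂]`
with `H(p₂) > 0`, it is constant on that segment. -/
def RadStrictConvex {n : ℕ} (H : EuclideanSpace ℝ (Fin n) → ℝ) : Prop :=
  ∀ p₁ p₂ : EuclideanSpace ℝ (Fin n),
    (∀ s ∈ Set.Icc (0:ℝ) 1,
      H ((1 - s) • p₁ + s • p₂) = (1 - s) * H p₁ + s * H p₂) →
    0 < H p₂ →
    ∀ s ∈ Set.Icc (0:ℝ) 1, H ((1 - s) • p₁ + s • p₂) = H p₂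

/-- Let `H` be convex with `H(0) = 0`, `|p|² ≤ H(p) ≤ |p|² + M|p|`,
radially strictly convex, and for `A ≥ 1` set `H_A(q) = A² H(q/A)`.  Then for every
`θ > 0` there is `μ > 0` such that `q·p ≥ H_A(p) + μ A²` whenever `A ≥ 1`,
`|p| ≥ θ A`, and `q` is a subgradient of `H_A` at `p`. -/
theorem statement18 {n : ℕ} (hn : 1 ≤ n) (M : ℝ) (hM : 0 ≤ M)
    (H : EuclideanSpace ℝ (Fin n) → ℝ) (hconv : ConvexOn ℝ Set.univ H)
    (h0 : H 0 = 0)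
    (hbounds : ∀ p, ‖p‖ ^ 2 ≤ H p ∧ H p ≤ ‖p‖ ^ 2 + M * ‖p‖)
    (hrad : RadStrictConvex H) :
    ∀ θ > (0:ℝ), ∃ μ > (0:ℝ), ∀ A : ℝ, 1 ≤ A →
      ∀ p : EuclideanSpace ℝ (Fin n), ‖p‖ ≥ θ * A →
      ∀ q, IsSubgradient (fun x => A ^ 2 * H (A⁻¹ • x)) p q →
        ⟪q, p⟫ ≥ A ^ 2 * H (A⁻¹ • p) + μ * A ^ 2 := by
  intro θ hθ
  obtain ⟨μ, hμ, hmain⟩ := main_free hn M hM H hconv h0 hbounds hrad θ hθ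
  refine ⟨μ, hμ, ?_⟩
  intro A hA p hp q hq
  have hA0 : (0:ℝ) < A := by linarith
  have hAne : A ≠ 0 := ne_of_gt hA0
  set p' : EuclideanSpace ℝ (Fin n) := A⁻¹ • p with hp'
  set q' : EuclideanSpace ℝ (Fin n) := A⁻¹ • q with hq'
  have hp'norm : θ ≤ ‖p'‖ := by
    rw [hp', norm_smul, norm_inv, Real.norm_eq_abs, abs_of_pos hA0]
    rw [ge_iff_le, ← le_div_iff₀ hA0] at hp
    rw [inv_mul_eq_div]
    linarith
  -- q' is a subgradient of H at p'
  have hsub : ∀ y, H y ≥ H p' + ⟪q', y - p'⟫ := by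
    intro y
    have h := hq (A • y)
    simp only at h
    have e1 : A⁻¹ • (A • y) = y := by
      rw [smul_smul, inv_mul_cancel₀ hAne, one_smul]
    have e2 : A • y - p = A • (y - p') := by
      rw [smul_sub, hp', smul_smul, mul_inv_cancel₀ hAne, one_smul]
    rw [e1, e2, real_inner_smul_right] at h
    have e3 : ⟪q', y - p'⟫ = A⁻¹ * ⟪q, y - p'⟫ := by
      rw [hq', real_inner_smul_left]
    have e4 : A ^ 2 * (H p' + ⟪q', y - p'⟫) = A ^ 2 * H p' + A * ⟪q, y - p'⟫ := by
      rw [e3]; field_simp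
    have key : A ^ 2 * (H p' + ⟪q', y - p'⟫) ≤ A ^ 2 * H y := by
      rw [e4]; linarith [h]
    exact (mul_le_mul_iff_right₀ (pow_pos hA0 2)).mp key
  -- gap at p'
  have hgap : ⟪q', p'⟫ ≥ H p' + μ := by
    have h := hsub ((2⁻¹:ℝ) • p')
    have e1 : (2⁻¹:ℝ) • p' - p' = (-2⁻¹:ℝ) • p' := by
      have : p' = (1:ℝ) • p' := (one_smul ℝ p').symm
      nth_rewrite 2 [this]
      rw [← sub_smul]; norm_num
    rw [e1, real_inner_smul_right] at h
    have hD := hmain p' hp'norm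
    linarith
  -- scale back up
  have e5 : ⟪q, p⟫ = A ^ 2 * ⟪q', p'⟫ := by
    rw [hq', hp', real_inner_smul_left, real_inner_smul_right]
    field_simp
  rw [e5]
  nlinarith [hgap, pow_pos hA0 2]
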